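/- Let 𝒴 = {y ∈ ℝⁿ : ‖y‖_∞ ≤ ρ, ‖y‖₁ ≤ n_t ρ} for ρ > 0 and integer 1 ≤ n_t ≤ n. Every extreme point of 𝒴 has exactly n_t coordinates equal to ±ρ and the rest equal to 0; consequently the number of extreme points is 2^{n_t} · C(n, n_t). -/

import Mathlib

open Finset

private def vOf (ρ : ℝ) : Option Bool → ℝ
  | none => 0
  | some true => ρ
  | some false => -ρ

private lemma vOf_inj {ρ : ℝ} (hρ : 0 < ρ) : Function.Injective (vOf ρ) := by
  intro a b hab
  match a, b with
  | none, none => rfl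
  | some true, some true => rfl
  | some false, some false => rfl
  | none, some true => simp [vOf] at hab; linarith
  | none, some false => simp [vOf] at hab; linarith
  | some true, none => simp [vOf] at hab; linarith
  | some false, none => simp [vOf] at hab; linarith
  | some true, some false => simp [vOf] at hab; linarith
  | some false, some true => simp [vOf] at hab; linarith

private def GG (n nt : ℕ) : Finset (Fin n → Option Bool) :=
  univ.filter fun g => (univ.filter fun i => (g i).isSome).card = nt

private lemma GG_card (n nt : ℕ) : (GG n nt).card = 2 ^ nt * n.choose nt := by
  have hmem : ∀ o : Option Bool,
      (o ∈ ({some true, some false} : Finset (Option Bool))) ↔ o.isSome := by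
    intro o; rcases o with _ | (_|_) <;> simp
  rw [Finset.card_eq_sum_card_fiberwise
    (f := fun g => univ.filter fun i => (g i).isSome)
    (t := Finset.powersetCard nt (univ : Finset (Fin n)))
    (fun g hg => by
      simp only [GG, Finset.mem_coe, mem_filter, mem_univ, true_and] at hg
      simp [Finset.mem_powersetCard, hg])]
  have key : ∀ s ∈ Finset.powersetCard nt (univ : Finset (Fin n)),
      ((GG n nt).filter fun g => (univ.filter fun i => (g i).isSome) = s).card = 2 ^ nt := by
    intro s hs
    rw [Finset.mem_powersetCard] at hs
    have hchar : ∀ g : Fin n → Option Bool,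
        ((univ.filter fun i => (g i).isSome) = s ↔
          ∀ i, g i ∈ (if i ∈ s then ({some true, some false} : Finset (Option Bool))
            else {none})) := by
      intro g
      constructor
      · intro h i
        by_cases hi : i ∈ s
        · rw [if_pos hi, hmem]
          rw [← h, mem_filter] at hi
          exact hi.2
        · rw [if_neg hi, Finset.mem_singleton]
          by_contra hne
          have hiss : (g i).isSome := Option.ne_none_iff_isSome.mp hne
          exact hi (by rw [← h, mem_filter]; exact ⟨mem_univ i, hiss⟩)
      · intro h
        ext i
        simp only [mem_filter, mem_univ, true_and]
        have hii := h i
        by_cases hi : i ∈ s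
        · rw [if_pos hi, hmem] at hii; exact ⟨fun _ => hi, fun _ => hii⟩
        · rw [if_neg hi, Finset.mem_singleton] at hii
          simp [hii, hi]
    have hfib : ((GG n nt).filter fun g => (univ.filter fun i => (g i).isSome) = s)
        = Fintype.piFinset (fun i => if i ∈ s then ({some true, some false} : Finset (Option Bool)) else {none}) := by
      ext g
      simp only [mem_filter, GG, mem_univ, true_and, Fintype.mem_piFinset]
      exact ⟨fun h => (hchar g).mp h.2,
        fun h => ⟨by rw [(hchar g).mpr h, hs.2], (hchar g).mpr h⟩⟩
    rw [hfib, Fintype.card_piFinset]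
    have hcards : ∀ i : Fin n, (if i ∈ s then ({some true, some false} : Finset (Option Bool)) else {none}).card
        = if i ∈ s then 2 else 1 := by
      intro i; by_cases hi : i ∈ s <;> simp [hi]
    rw [Finset.prod_congr rfl (fun i _ => hcards i)]
    rw [Finset.prod_ite_mem, Finset.univ_inter, Finset.prod_const, hs.2]
  rw [Finset.sum_congr rfl key, Finset.sum_const, Finset.card_powersetCard, card_univ,
    Fintype.card_fin, smul_eq_mul, Nat.mul_comm]

private noncomputable def SS (n nt : ℕ) (ρ : ℝ) : Finset (Fin n → ℝ) :=
  (GG n nt).image fun g i => vOf ρ (g i)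

private lemma SS_card {n nt : ℕ} {ρ : ℝ} (hρ : 0 < ρ) :
    (SS n nt ρ).card = 2 ^ nt * n.choose nt := by
  rw [SS, Finset.card_image_of_injective _
    (fun g₁ g₂ h => funext fun i => vOf_inj hρ (congrFun h i)), GG_card]

private lemma not_extreme_of_perturb {n : ℕ} {K : Set (Fin n → ℝ)} {y d : Fin n → ℝ}
    (hd : d ≠ 0) (h1 : y + d ∈ K) (h2 : y - d ∈ K) :
    y ∉ Set.extremePoints ℝ K := by
  intro hy
  have hseg : y ∈ openSegment ℝ (y + d) (y - d) :=
    ⟨1/2, 1/2, by norm_num, by norm_num, by norm_num, by module⟩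
  have h := hy.2 h1 h2 hseg
  exact hd (by simpa using congrArg (fun z => z - y) h)

private noncomputable def ssign (t : ℝ) : ℝ := if 0 ≤ t then 1 else -1

private lemma ssign_ne_zero (t : ℝ) : ssign t ≠ 0 := by
  unfold ssign; split <;> norm_num

private lemma abs_pert {t ε : ℝ} (hε0 : 0 ≤ ε) (hεt : ε ≤ |t|) :
    |t + ε * ssign t| = |t| + ε ∧ |t - ε * ssign t| = |t| - ε := by
  unfold ssign
  rcases le_or_gt 0 t with h | h
  · rw [if_pos h, mul_one, abs_of_nonneg h] at *
    rw [abs_of_nonneg (by linarith), abs_of_nonneg (by linarith)]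
    exact ⟨rfl, rfl⟩
  · rw [if_neg (not_le.mpr h), abs_of_neg h] at *
    rw [mul_neg, mul_one, sub_neg_eq_add]
    rw [abs_of_neg (by linarith), abs_of_nonpos (by linarith)]
    constructor <;> ring

private lemma shape_of_extreme {n nt : ℕ} (hnt : 1 ≤ nt) (hntn : nt ≤ n) {ρ : ℝ} (hρ : 0 < ρ)
    {y : Fin n → ℝ}
    (hy : y ∈ Set.extremePoints ℝ
      {y : Fin n → ℝ | (∀ i, |y i| ≤ ρ) ∧ ∑ i, |y i| ≤ (nt : ℝ) * ρ}) :
    (∀ i, y i = ρ ∨ y i = -ρ ∨ y i = 0) ∧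
      (univ.filter fun i => y i ≠ 0).card = nt := by
  obtain ⟨hbd, hsum⟩ := hy.1
  -- Step 1 : the ℓ¹ constraint is tight
  have hsum_eq : ∑ i, |y i| = (nt : ℝ) * ρ := by
    rcases hsum.lt_or_eq with hlt | he
    · exfalso
      have hex : ∃ i, |y i| < ρ := by
        by_contra hno
        push_neg at hno
        have hall : ∀ i, |y i| = ρ := fun i => le_antisymm (hbd i) (hno i)
        have : ∑ i, |y i| = (n : ℝ) * ρ := by
          rw [Finset.sum_congr rfl (fun i _ => hall i), Finset.sum_const, card_univ,
            Fintype.card_fin, nsmul_eq_mul]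
        rw [this] at hlt
        have : (nt : ℝ) ≤ (n : ℝ) := Nat.cast_le.mpr hntn
        nlinarith
      obtain ⟨i, hilt⟩ := hex
      set ε := min (ρ - |y i|) ((nt : ℝ) * ρ - ∑ j, |y j|) with hεdef
      have hε : 0 < ε := lt_min (by linarith) (by linarith)
      have hε1 : ε ≤ ρ - |y i| := min_le_left _ _
      have hε2 : ε ≤ (nt : ℝ) * ρ - ∑ j, |y j| := min_le_right _ _
      set d : Fin n → ℝ := fun k => if k = i then ε else 0 with hddef
      have hsumd : ∑ k, d k = ε := by
        simp [hddef]
      have hmem : ∀ σ : ℝ, |σ| = 1 → (fun k => y k + σ * d k) ∈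
          {y : Fin n → ℝ | (∀ i, |y i| ≤ ρ) ∧ ∑ i, |y i| ≤ (nt : ℝ) * ρ} := by
        intro σ hσ
        have habs : ∀ k, |y k + σ * d k| ≤ |y k| + d k := by
          intro k
          calc |y k + σ * d k| ≤ |y k| + |σ * d k| := abs_add_le _ _
            _ = |y k| + d k := by
                have hd0 : (0:ℝ) ≤ d k := by by_cases h : k = i <;> simp [hddef, h, hε.le]
                rw [abs_mul, hσ, one_mul, abs_of_nonneg hd0]
        constructor
        · intro k
          by_cases h : k = i
          · subst h
            calc |y k + σ * d k| ≤ |y k| + d k := habs k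
              _ = |y k| + ε := by simp [hddef]
              _ ≤ ρ := by linarith
          · calc |y k + σ * d k| ≤ |y k| + d k := habs k
              _ = |y k| := by simp [hddef, h]
              _ ≤ ρ := hbd k
        · calc ∑ k, |y k + σ * d k| ≤ ∑ k, (|y k| + d k) := Finset.sum_le_sum (fun k _ => habs k)
            _ = (∑ k, |y k|) + ε := by rw [Finset.sum_add_distrib, hsumd]
            _ ≤ (nt : ℝ) * ρ := by linarith
      have hdne : d ≠ 0 := by
        intro h0
        have := congrFun h0 i
        simp [hddef] at this
        exact hε.ne' this
      refine not_extreme_of_perturb hdne ?_ ?_ hy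
      · have := hmem 1 (by norm_num)
        simpa using this
      · have := hmem (-1) (by norm_num)
        convert this using 1
        funext k
        simp [sub_eq_add_neg]
    · exact he
  -- Step 2 : every coordinate is ±ρ or 0
  have hshape : ∀ i, y i = ρ ∨ y i = -ρ ∨ y i = 0 := by
    by_contra hno
    push_neg at hno
    obtain ⟨i, hi1, hi2, hi3⟩ := hno
    have hipos : 0 < |y i| := abs_pos.mpr hi3
    have hilt : |y i| < ρ := by
      rcases (hbd i).lt_or_eq with h | h
      · exact h
      · exact absurd ((abs_eq hρ.le).mp h) (by tauto)
    by_cases hex : ∃ j, j ≠ i ∧ 0 < |y j| ∧ |y j| < ρ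
    · obtain ⟨j, hji, hjpos, hjlt⟩ := hex
      set ε := min (min (|y i|) (ρ - |y i|)) (min (|y j|) (ρ - |y j|)) with hεdef
      have hε : 0 < ε := lt_min (lt_min hipos (by linarith)) (lt_min hjpos (by linarith))
      have hεi1 : ε ≤ |y i| := le_trans (min_le_left _ _) (min_le_left _ _)
      have hεi2 : ε ≤ ρ - |y i| := le_trans (min_le_left _ _) (min_le_right _ _)
      have hεj1 : ε ≤ |y j| := le_trans (min_le_right _ _) (min_le_left _ _)
      have hεj2 : ε ≤ ρ - |y j| := le_trans (min_le_right _ _) (min_le_right _ _)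
      set d : Fin n → ℝ := fun k =>
        (if k = i then ε * ssign (y i) else 0) + (if k = j then -(ε * ssign (y j)) else 0)
        with hddef
      have hij : i ≠ j := fun h => hji h.symm
      have hdi : d i = ε * ssign (y i) := by simp [hddef, hij]
      have hdj : d j = -(ε * ssign (y j)) := by simp [hddef, hji]
      have hdk : ∀ k, k ≠ i → k ≠ j → d k = 0 := by
        intro k h1 h2; simp [hddef, h1, h2]
      have hai := abs_pert hε.le hεi1
      have haj := abs_pert hε.le hεj1
      have habs : ∀ σ : ℝ, (σ = 1 ∨ σ = -1) → ∀ k,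
          |y k + σ * d k|
            = |y k| + σ * ((if k = i then ε else 0) + (if k = j then -ε else 0)) := by
        intro σ hσ k
        by_cases h1 : k = i
        · subst h1
          rw [hdi, if_pos rfl, if_neg hij]
          rcases hσ with h | h <;> subst h
          · simpa using hai.1
          · rw [neg_one_mul, neg_one_mul, ← sub_eq_add_neg, hai.2]
            ring
        · by_cases h2 : k = j
          · subst h2
            rw [hdj, if_neg h1, if_pos rfl]
            rcases hσ with h | h <;> subst h
            · rw [one_mul, one_mul, ← sub_eq_add_neg, zero_add, haj.2]
              ring
            · rw [neg_one_mul, neg_neg, neg_one_mul, zero_add, neg_neg, haj.1]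
          · rw [hdk k h1 h2, if_neg h1, if_neg h2]
            simp
      have hesum : ∑ k, ((if k = i then ε else 0) + (if k = j then (-ε) else 0)) = 0 := by
        rw [Finset.sum_add_distrib]
        simp
      have hmem : ∀ σ : ℝ, (σ = 1 ∨ σ = -1) → (fun k => y k + σ * d k) ∈
          {y : Fin n → ℝ | (∀ i, |y i| ≤ ρ) ∧ ∑ i, |y i| ≤ (nt : ℝ) * ρ} := by
        intro σ hσ
        constructor
        · intro k
          rw [habs σ hσ k]
          by_cases h1 : k = i
          · subst h1
            rw [if_pos rfl, if_neg hij, add_zero]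
            rcases hσ with h | h <;> subst h <;> [skip; skip] <;> nlinarith [hbd k]
          · by_cases h2 : k = j
            · subst h2
              rw [if_neg h1, if_pos rfl, zero_add]
              rcases hσ with h | h <;> subst h <;> nlinarith [hbd k]
            · rw [if_neg h1, if_neg h2]
              simpa using hbd k
        · calc ∑ k, |y k + σ * d k|
              = ∑ k, (|y k| + σ * ((if k = i then ε else 0) + (if k = j then -ε else 0))) :=
                Finset.sum_congr rfl (fun k _ => habs σ hσ k)
            _ = (∑ k, |y k|)
                + σ * ∑ k, ((if k = i then ε else 0) + (if k = j then -ε else 0)) := by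
                rw [Finset.sum_add_distrib, ← Finset.mul_sum]
            _ ≤ (nt : ℝ) * ρ := by rw [hesum, hsum_eq, mul_zero, add_zero]
      have hdne : d ≠ 0 := by
        intro h0
        have h := congrFun h0 i
        rw [hdi] at h
        exact mul_ne_zero hε.ne' (ssign_ne_zero (y i)) h
      refine not_extreme_of_perturb hdne ?_ ?_ hy
      · have := hmem 1 (Or.inl rfl)
        convert this using 1
        funext k
        simp
      · have := hmem (-1) (Or.inr rfl)
        convert this using 1
        funext k
        simp [sub_eq_add_neg]
    · push_neg at hex
      have hval : ∀ j, j ≠ i → |y j| = 0 ∨ |y j| = ρ := by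
        intro j hj
        rcases eq_or_lt_of_le (abs_nonneg (y j)) with h | h
        · exact Or.inl h.symm
        · exact Or.inr (le_antisymm (hbd j) (hex j hj h))
      set m := ((univ.erase i).filter (fun j => |y j| = ρ)).card with hmdef
      have hsplit : |y i| + ∑ j ∈ univ.erase i, |y j| = (nt : ℝ) * ρ := by
        rw [Finset.add_sum_erase univ (fun j => |y j|) (mem_univ i)]
        exact hsum_eq
      have herase : ∑ j ∈ univ.erase i, |y j| = (m : ℝ) * ρ := by
        have hco : ∀ j ∈ univ.erase i, |y j| = if |y j| = ρ then ρ else 0 := by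
          intro j hj
          rcases hval j (Finset.ne_of_mem_erase hj) with h | h
          · rw [h, if_neg hρ.ne]
          · rw [h, if_pos rfl]
        rw [Finset.sum_congr rfl hco, ← Finset.sum_filter, Finset.sum_const, nsmul_eq_mul]
      rw [herase] at hsplit
      have h1 : (m : ℝ) * ρ < (nt : ℝ) * ρ := by linarith
      have h2 : (nt : ℝ) * ρ < ((m : ℝ) + 1) * ρ := by nlinarith
      have hm1 : m < nt := by
        have := lt_of_mul_lt_mul_right h1 hρ.le
        exact_mod_cast this
      have hm2 : nt < m + 1 := by
        have := lt_of_mul_lt_mul_right h2 hρ.le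
        exact_mod_cast this
      omega
  -- Step 3 : exactly nt nonzero coordinates
  have habs0 : ∀ k, |y k| = if y k ≠ 0 then ρ else 0 := by
    intro k
    rcases hshape k with h | h | h
    · rw [h, if_pos hρ.ne', abs_of_pos hρ]
    · rw [h, if_pos (by simpa using hρ.ne'), abs_neg, abs_of_pos hρ]
    · rw [h]
      simp
  have hcount : ((univ.filter fun k => y k ≠ 0).card : ℝ) * ρ = (nt : ℝ) * ρ := by
    rw [← hsum_eq, Finset.sum_congr rfl (fun k _ => habs0 k), ← Finset.sum_filter,
      Finset.sum_const, nsmul_eq_mul]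
  exact ⟨hshape, by exact_mod_cast mul_right_cancel₀ hρ.ne' hcount⟩

private lemma extreme_of_shape {n nt : ℕ} {ρ : ℝ} (hρ : 0 < ρ) {y : Fin n → ℝ}
    (hsh : ∀ i, y i = ρ ∨ y i = -ρ ∨ y i = 0)
    (hcard : (univ.filter fun i => y i ≠ 0).card = nt) :
    y ∈ Set.extremePoints ℝ
      {y : Fin n → ℝ | (∀ i, |y i| ≤ ρ) ∧ ∑ i, |y i| ≤ (nt : ℝ) * ρ} := by
  have habs : ∀ i, |y i| = if y i ≠ 0 then ρ else 0 := by
    intro i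
    rcases hsh i with h | h | h
    · rw [h, if_pos hρ.ne', abs_of_pos hρ]
    · rw [h, if_pos (by simpa using hρ.ne'), abs_neg, abs_of_pos hρ]
    · rw [h]; simp
  have hsum : ∑ i, |y i| = (nt : ℝ) * ρ := by
    rw [Finset.sum_congr rfl (fun i _ => habs i), ← Finset.sum_filter,
      Finset.sum_const, nsmul_eq_mul, hcard]
  have hyK : y ∈ {y : Fin n → ℝ | (∀ i, |y i| ≤ ρ) ∧ ∑ i, |y i| ≤ (nt : ℝ) * ρ} := by
    refine ⟨fun i => ?_, le_of_eq hsum⟩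
    rw [habs i]
    split <;> [exact le_refl ρ; exact hρ.le]
  refine ⟨hyK, ?_⟩
  rintro x₁ hx₁ x₂ hx₂ ⟨a, b, ha, hb, hab, hy⟩
  have hagree : ∀ x ∈ {y : Fin n → ℝ | (∀ i, |y i| ≤ ρ) ∧ ∑ i, |y i| ≤ (nt : ℝ) * ρ},
      (∀ i, y i ≠ 0 → x i = y i) → x = y := by
    intro x hx hag
    funext i
    by_cases hi : y i = 0
    · -- the ℓ¹ mass is exhausted on the support of y
      rw [hi]
      have h₁ : ∑ j ∈ univ.filter (fun j => y j ≠ 0), |x j| = (nt : ℝ) * ρ := by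
        have : ∀ j ∈ univ.filter (fun j => y j ≠ 0), |x j| = ρ := by
          intro j hj
          rw [mem_filter] at hj
          rw [hag j hj.2, habs j, if_pos hj.2]
        rw [Finset.sum_congr rfl this, Finset.sum_const, nsmul_eq_mul, hcard]
      have hsplit := Finset.sum_filter_add_sum_filter_not univ (fun j => y j ≠ 0)
        (fun j => |x j|)
      have h₂ : ∑ j ∈ univ.filter (fun j => ¬ y j ≠ 0), |x j| ≤ 0 := by
        have := hx.2
        rw [← hsplit, h₁] at this
        linarith
      have h₃ : ∑ j ∈ univ.filter (fun j => ¬ y j ≠ 0), |x j| = 0 :=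
        le_antisymm h₂ (Finset.sum_nonneg fun j _ => abs_nonneg _)
      have h₄ := (Finset.sum_eq_zero_iff_of_nonneg fun j _ => abs_nonneg (x j)).mp h₃
      have hi' : i ∈ univ.filter (fun j => ¬ y j ≠ 0) := by
        simp [hi]
      exact abs_eq_zero.mp (h₄ i hi')
    · exact hag i hi
  have hyi : ∀ i, a * x₁ i + b * x₂ i = y i := by
    intro i
    have := congrFun hy i
    simpa using this
  have hco : ∀ i, y i ≠ 0 → x₁ i = y i ∧ x₂ i = y i := by
    intro i hi
    have h1 := abs_le.mp (hx₁.1 i)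
    have h2 := abs_le.mp (hx₂.1 i)
    rcases hsh i with h | h | h
    · have hz : a * (ρ - x₁ i) + b * (ρ - x₂ i) = 0 := by
        have := hyi i
        rw [h] at this
        linear_combination ρ * hab - this
      have t1 : 0 ≤ a * (ρ - x₁ i) := mul_nonneg ha.le (by linarith [h1.2])
      have t2 : 0 ≤ b * (ρ - x₂ i) := mul_nonneg hb.le (by linarith [h2.2])
      have e1 : a * (ρ - x₁ i) = 0 := by linarith
      have e2 : b * (ρ - x₂ i) = 0 := by linarith
      rw [h]
      constructor
      · have := (mul_eq_zero.mp e1).resolve_left ha.ne'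
        linarith
      · have := (mul_eq_zero.mp e2).resolve_left hb.ne'
        linarith
    · have hz : a * (x₁ i + ρ) + b * (x₂ i + ρ) = 0 := by
        have := hyi i
        rw [h] at this
        linear_combination this + ρ * hab
      have t1 : 0 ≤ a * (x₁ i + ρ) := mul_nonneg ha.le (by linarith [h1.1])
      have t2 : 0 ≤ b * (x₂ i + ρ) := mul_nonneg hb.le (by linarith [h2.1])
      have e1 : a * (x₁ i + ρ) = 0 := by linarith
      have e2 : b * (x₂ i + ρ) = 0 := by linarith
      rw [h]
      constructor
      · have := (mul_eq_zero.mp e1).resolve_left ha.ne'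
        linarith
      · have := (mul_eq_zero.mp e2).resolve_left hb.ne'
        linarith
    · exact absurd h hi
  exact hagree x₁ hx₁ (fun i hi => (hco i hi).1)

private lemma mem_SS_iff {n nt : ℕ} {ρ : ℝ} (hρ : 0 < ρ) (y : Fin n → ℝ) :
    y ∈ SS n nt ρ ↔ (∀ i, y i = ρ ∨ y i = -ρ ∨ y i = 0) ∧
      (univ.filter fun i => y i ≠ 0).card = nt := by
  constructor
  · intro hy
    rw [SS, Finset.mem_image] at hy
    obtain ⟨g, hg, rfl⟩ := hy
    rw [GG, mem_filter] at hg
    constructor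
    · intro i
      rcases hgi : g i with _ | (_|_) <;> simp [vOf, hgi]
    · rw [← hg.2]
      congr 1
      ext i
      simp only [mem_filter, mem_univ, true_and]
      rcases hgi : g i with _ | (_|_) <;> simp [vOf, hgi, hρ.ne', hρ.ne]
  · rintro ⟨hsh, hcard⟩
    rw [SS, Finset.mem_image]
    refine ⟨fun i => if y i = ρ then some true else if y i = -ρ then some false else none,
      ?_, ?_⟩
    · rw [GG, mem_filter]
      refine ⟨mem_univ _, ?_⟩
      rw [← hcard]
      congr 1
      ext i
      rcases hsh i with h | h | h <;>
        simp [h, hρ.ne', hρ.ne, (by linarith : ρ ≠ -ρ), (by linarith : (-ρ:ℝ) ≠ ρ),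
          (by linarith : (-ρ:ℝ) ≠ 0)]
    · funext i
      rcases hsh i with h | h | h <;>
        simp [h, vOf, hρ.ne', hρ.ne, (by linarith : ρ ≠ -ρ), (by linarith : (-ρ:ℝ) ≠ ρ),
          (by linarith : (-ρ:ℝ) ≠ 0)]

private lemma extreme_eq {n nt : ℕ} (hnt : 1 ≤ nt) (hntn : nt ≤ n) {ρ : ℝ} (hρ : 0 < ρ) :
    Set.extremePoints ℝ
        {y : Fin n → ℝ | (∀ i, |y i| ≤ ρ) ∧ ∑ i, |y i| ≤ (nt : ℝ) * ρ}
      = ↑(SS n nt ρ) := by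
  ext y
  rw [Finset.mem_coe, mem_SS_iff hρ]
  constructor
  · exact fun hy => shape_of_extreme hnt hntn hρ hy
  · exact fun ⟨h1, h2⟩ => extreme_of_shape hρ h1 h2

/-- Extreme points of the budget set {‖y‖_∞ ≤ ρ, ‖y‖₁ ≤ n_t ρ}: each has exactly
n_t coordinates equal to ±ρ and the rest 0, and there are 2^{n_t} · C(n, n_t)
of them. -/
theorem stmt14 {n : ℕ} (nt : ℕ) (hnt : 1 ≤ nt) (hntn : nt ≤ n) (ρ : ℝ) (hρ : 0 < ρ) :
    (∀ y ∈ Set.extremePoints ℝ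
        {y : Fin n → ℝ | (∀ i, |y i| ≤ ρ) ∧ ∑ i, |y i| ≤ (nt : ℝ) * ρ},
      (∀ i, y i = ρ ∨ y i = -ρ ∨ y i = 0) ∧ {i : Fin n | y i ≠ 0}.ncard = nt) ∧
    (Set.extremePoints ℝ
        {y : Fin n → ℝ | (∀ i, |y i| ≤ ρ) ∧ ∑ i, |y i| ≤ (nt : ℝ) * ρ}).ncard =
      2 ^ nt * n.choose nt := by
  constructor
  · intro y hy
    obtain ⟨h1, h2⟩ := shape_of_extreme hnt hntn hρ hy
    refine ⟨h1, ?_⟩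
    have hset : {i : Fin n | y i ≠ 0} = ↑(univ.filter fun i => y i ≠ 0) := by
      ext i; simp
    rw [hset, Set.ncard_coe_finset, h2]
  · rw [extreme_eq hnt hntn hρ, Set.ncard_coe_finset, SS_card hρ]
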